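/- Let p > 0 and let f : [0,∞) → ℝ be a C¹, nondecreasing function with f(t) > 0 for all t > 0, and set F(s) = ∫₀^s f(t) dt. Then ∫₁^∞ (∫₀^s F(t) dt)^(−p/(2p+1)) ds < ∞ if and only if ∫₁^∞ (∫₀^s √(f(t)) dt)^(−2p/(2p+1)) ds < ∞. -/

import Mathlib

open MeasureTheory Set Filter

private lemma aux_ii {g : ℝ → ℝ} (hg : MonotoneOn g (Ici 0)) {a b : ℝ}
    (ha : 0 ≤ a) (hab : a ≤ b) : IntervalIntegrable g MeasureTheory.volume a b := by
  apply MonotoneOn.intervalIntegrable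
  apply hg.mono
  rw [uIcc_of_le hab]
  exact fun x hx => le_trans ha hx.1

private lemma aux_upper {g : ℝ → ℝ} (hg : MonotoneOn g (Ici 0))
    {a : ℝ} (ha : 0 ≤ a) : (∫ t in (0:ℝ)..a, g t) ≤ a * g a := by
  have h := intervalIntegral.integral_mono_on ha (aux_ii hg le_rfl ha)
      (intervalIntegrable_const (c := g a))
      (fun x hx => hg hx.1 (mem_Ici.2 ha) hx.2)
  simpa using h

private lemma aux_lower {g : ℝ → ℝ} (hg : MonotoneOn g (Ici 0))
    (hgnn : ∀ x ∈ Ici (0:ℝ), 0 ≤ g x)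
    {a : ℝ} (ha : 0 ≤ a) : a * g a ≤ ∫ t in (0:ℝ)..(2*a), g t := by
  have h2a : a ≤ 2*a := by linarith
  have i1 : IntervalIntegrable g MeasureTheory.volume 0 a := aux_ii hg le_rfl ha
  have i2 : IntervalIntegrable g MeasureTheory.volume a (2*a) := aux_ii hg ha h2a
  have hadd := intervalIntegral.integral_add_adjacent_intervals i1 i2
  have h1 : 0 ≤ ∫ t in (0:ℝ)..a, g t :=
    intervalIntegral.integral_nonneg ha (fun x hx => hgnn x hx.1)
  have h2 : a * g a ≤ ∫ t in a..(2*a), g t := by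
    have h := intervalIntegral.integral_mono_on h2a
        (intervalIntegrable_const (c := g a)) i2
        (fun x hx => hg (mem_Ici.2 ha) (le_trans ha hx.1) hx.1)
    have hc : (∫ _ in a..(2*a), g a) = a * g a := by
      rw [intervalIntegral.integral_const, smul_eq_mul]; ring
    linarith [h, hc.ge]
  linarith

private lemma aux_prim_nonneg {g : ℝ → ℝ} (hgnn : ∀ x ∈ Ici (0:ℝ), 0 ≤ g x)
    {a : ℝ} (ha : 0 ≤ a) : 0 ≤ ∫ t in (0:ℝ)..a, g t :=
  intervalIntegral.integral_nonneg ha (fun x hx => hgnn x hx.1)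

private lemma aux_prim_mono {g : ℝ → ℝ} (hg : MonotoneOn g (Ici 0))
    (hgnn : ∀ x ∈ Ici (0:ℝ), 0 ≤ g x) :
    MonotoneOn (fun s => ∫ t in (0:ℝ)..s, g t) (Ici 0) := by
  intro x hx y hy hxy
  have hadd := intervalIntegral.integral_add_adjacent_intervals
    (aux_ii hg le_rfl hx) (aux_ii hg hx hxy)
  have h2 : 0 ≤ ∫ t in x..y, g t :=
    intervalIntegral.integral_nonneg hxy (fun u hu => hgnn u (le_trans hx hu.1))
  dsimp only
  linarith

/-- For `f : [0,∞) → ℝ` a `C¹` nondecreasing function with `f > 0` on `(0,∞)` and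
`F(s) = ∫₀^s f(t) dt`, one has `∫₁^∞ (∫₀^s F(t) dt)^(-p/(2p+1)) ds < ∞` if and only if
`∫₁^∞ (∫₀^s √(f(t)) dt)^(-2p/(2p+1)) ds < ∞`. -/
theorem keller_osserman_equivalence (p : ℝ) (hp : 0 < p)
    (f : ℝ → ℝ) (hf : ContDiffOn ℝ 1 f (Set.Ici 0))
    (hfmono : ∀ s t : ℝ, 0 ≤ s → s ≤ t → f s ≤ f t)
    (hfpos : ∀ t : ℝ, 0 < t → 0 < f t) :
    IntegrableOn
        (fun s : ℝ => (∫ t in (0:ℝ)..s, ∫ x in (0:ℝ)..t, f x) ^ (-(p / (2 * p + 1))))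
        (Set.Ici (1:ℝ)) ↔
      IntegrableOn
        (fun s : ℝ => (∫ t in (0:ℝ)..s, Real.sqrt (f t)) ^ (-(2 * p / (2 * p + 1))))
        (Set.Ici (1:ℝ)) := by
  have hd : (0:ℝ) < 2*p+1 := by linarith
  have hq : 0 < p / (2*p+1) := div_pos hp hd
  set e1 : ℝ := -(p / (2 * p + 1)) with he1
  set e2 : ℝ := -(2 * p / (2 * p + 1)) with he2
  have he1neg : e1 ≤ 0 := by rw [he1]; linarith
  have he2neg : e2 ≤ 0 := by
    rw [he2]
    have : 0 < 2 * p / (2*p+1) := div_pos (by linarith) hd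
    linarith
  have he21 : e2 = 2 * e1 := by rw [he1, he2]; ring
  -- basic facts about f
  have hf0 : 0 ≤ f 0 := by
    have hc : ContinuousWithinAt f (Ioi 0) 0 :=
      (hf.continuousOn.continuousWithinAt (mem_Ici.2 le_rfl)).mono Ioi_subset_Ici_self
    exact ge_of_tendsto hc (eventually_nhdsWithin_of_forall fun x hx => (hfpos x hx).le)
  have hfnn : ∀ x ∈ Ici (0:ℝ), 0 ≤ f x := by
    intro x hx
    rcases eq_or_lt_of_le (mem_Ici.1 hx) with h | h
    · rw [← h]; exact hf0
    · exact (hfpos x h).le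
  have hfm : MonotoneOn f (Ici 0) := fun s hs t _ hst => hfmono s t hs hst
  -- sqrt f
  have hsm : MonotoneOn (fun t => Real.sqrt (f t)) (Ici 0) :=
    fun s hs t ht hst => Real.sqrt_le_sqrt (hfm hs ht hst)
  have hsnn : ∀ x ∈ Ici (0:ℝ), 0 ≤ Real.sqrt (f x) := fun x _ => Real.sqrt_nonneg _
  -- F
  set F : ℝ → ℝ := fun t => ∫ x in (0:ℝ)..t, f x with hFdef
  have hFm : MonotoneOn F (Ici 0) := aux_prim_mono hfm hfnn
  have hFnn : ∀ x ∈ Ici (0:ℝ), 0 ≤ F x := fun x hx => aux_prim_nonneg hfnn hx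
  -- G and H
  set G : ℝ → ℝ := fun s => ∫ t in (0:ℝ)..s, F t with hGdef
  set H : ℝ → ℝ := fun s => ∫ t in (0:ℝ)..s, Real.sqrt (f t) with hHdef
  have hGm : MonotoneOn G (Ici 0) := aux_prim_mono hFm hFnn
  have hGnn : ∀ x ∈ Ici (0:ℝ), 0 ≤ G x := fun x hx => aux_prim_nonneg hFnn hx
  have hHm : MonotoneOn H (Ici 0) := aux_prim_mono hsm hsnn
  have hHnn : ∀ x ∈ Ici (0:ℝ), 0 ≤ H x := fun x hx => aux_prim_nonneg hsnn hx
  -- lower bounds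
  have hHlow : ∀ s : ℝ, 0 ≤ s → (s/2) * Real.sqrt (f (s/2)) ≤ H s := by
    intro s hs
    have := aux_lower hsm hsnn (a := s/2) (by linarith)
    rwa [show 2*(s/2) = s by ring] at this
  have hFlow : ∀ s : ℝ, 0 ≤ s → (s/2) * f (s/2) ≤ F s := by
    intro s hs
    have := aux_lower hfm hfnn (a := s/2) (by linarith)
    rwa [show 2*(s/2) = s by ring] at this
  have hGlow : ∀ s : ℝ, 0 ≤ s → (s/2) * F (s/2) ≤ G s := by
    intro s hs
    have := aux_lower hFm hFnn (a := s/2) (by linarith)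
    rwa [show 2*(s/2) = s by ring] at this
  -- positivity
  have hHpos : ∀ s : ℝ, 0 < s → 0 < H s := by
    intro s hs
    have h1 : 0 < (s/2) * Real.sqrt (f (s/2)) :=
      mul_pos (by linarith) (Real.sqrt_pos.2 (hfpos _ (by linarith)))
    exact lt_of_lt_of_le h1 (hHlow s hs.le)
  have hGpos : ∀ s : ℝ, 0 < s → 0 < G s := by
    intro s hs
    have h2 : 0 < F (s/2) := by
      have := hFlow (s/2) (by linarith)
      have h3 : 0 < (s/2/2) * f (s/2/2) :=
        mul_pos (by linarith) (hfpos _ (by linarith))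
      linarith
    exact lt_of_lt_of_le (mul_pos (by linarith) h2) (hGlow s hs.le)
  -- key pointwise inequality, forward direction: for s ≥ 2, G (s/2) ≤ (H s)^2
  have hkey1 : ∀ s : ℝ, 2 ≤ s → G (2⁻¹ * s) ≤ (H s)^2 := by
    intro s hs
    have hs0 : (0:ℝ) ≤ s := by linarith
    have h1 : G (2⁻¹ * s) ≤ (2⁻¹ * s) * F (2⁻¹ * s) :=
      aux_upper hFm (by linarith)
    have h2 : F (2⁻¹ * s) ≤ (2⁻¹ * s) * f (2⁻¹ * s) :=
      aux_upper hfm (by linarith)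
    have h3 : (s/2) * Real.sqrt (f (s/2)) ≤ H s := hHlow s hs0
    have h4 : ((s/2) * Real.sqrt (f (s/2)))^2 ≤ (H s)^2 := by
      apply sq_le_sq'
      · nlinarith [mul_nonneg (show (0:ℝ) ≤ s/2 by linarith) (Real.sqrt_nonneg (f (s/2)))]
      · exact h3
    have h5 : ((s/2) * Real.sqrt (f (s/2)))^2 = (s/2)^2 * f (s/2) := by
      rw [mul_pow, Real.sq_sqrt (hfnn _ (mem_Ici.2 (by linarith)))]
    have h6 : (2:ℝ)⁻¹ * s = s/2 := by ring
    rw [h6] at h1 h2 ⊢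
    have hFs : 0 ≤ F (s/2) := hFnn _ (mem_Ici.2 (by linarith))
    nlinarith [h4, h5, h1, h2]
  -- key pointwise inequality, backward direction: for s ≥ 4, (H (4⁻¹ * s))^2 ≤ G s
  have hkey2 : ∀ s : ℝ, 4 ≤ s → (H (4⁻¹ * s))^2 ≤ G s := by
    intro s hs
    have hs0 : (0:ℝ) ≤ s := by linarith
    have h1 : (s/2) * F (s/2) ≤ G s := hGlow s hs0
    have h2 : (s/4) * f (s/4) ≤ F (s/2) := by
      have := hFlow (s/2) (by linarith)
      rwa [show s/2/2 = s/4 by ring] at this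
    have h3 : H (4⁻¹ * s) ≤ (4⁻¹ * s) * Real.sqrt (f (4⁻¹ * s)) :=
      aux_upper hsm (by linarith)
    have h6 : (4:ℝ)⁻¹ * s = s/4 := by ring
    rw [h6] at h3 ⊢
    have hH0 : 0 ≤ H (s/4) := hHnn _ (mem_Ici.2 (by linarith))
    have h4 : (H (s/4))^2 ≤ ((s/4) * Real.sqrt (f (s/4)))^2 := by
      apply sq_le_sq' _ h3
      nlinarith [mul_nonneg (show (0:ℝ) ≤ s/4 by linarith) (Real.sqrt_nonneg (f (s/4)))]
    have h5 : ((s/4) * Real.sqrt (f (s/4)))^2 = (s/4)^2 * f (s/4) := by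
      rw [mul_pow, Real.sq_sqrt (hfnn _ (mem_Ici.2 (by linarith)))]
    have hfs : 0 ≤ f (s/4) := hfnn _ (mem_Ici.2 (by linarith))
    nlinarith [h4, h5, h1, h2]
  -- rpow identity: for x ≥ 0, x ^ e2 = (x^2) ^ e1
  have hrid : ∀ x : ℝ, 0 ≤ x → x ^ e2 = (x^2 : ℝ) ^ e1 := by
    intro x hx
    rw [he21, ← Real.rpow_natCast x 2, ← Real.rpow_mul hx]
    norm_num [mul_comm]
  -- the two functions
  set Φ : ℝ → ℝ := fun s : ℝ => G s ^ e1 with hΦdef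
  set Ψ : ℝ → ℝ := fun s : ℝ => H s ^ e2 with hΨdef
  -- antitonicity helpers
  have hΦanti : ∀ a b : ℝ, 0 < a → a ≤ b → Φ b ≤ Φ a := by
    intro a b ha hab
    exact Real.rpow_le_rpow_of_nonpos (hGpos a ha)
      (hGm (mem_Ici.2 ha.le) (mem_Ici.2 (ha.le.trans hab)) hab) he1neg
  have hΨanti : ∀ a b : ℝ, 0 < a → a ≤ b → Ψ b ≤ Ψ a := by
    intro a b ha hab
    exact Real.rpow_le_rpow_of_nonpos (hHpos a ha)
      (hHm (mem_Ici.2 ha.le) (mem_Ici.2 (ha.le.trans hab)) hab) he2neg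
  constructor
  · -- forward: Φ integrable on Ici 1 → Ψ integrable on Ici 1
    intro hΦint
    have hsplit : Icc (1:ℝ) 2 ∪ Ici (2:ℝ) = Ici (1:ℝ) :=
      Icc_union_Ici_eq_Ici (by norm_num)
    rw [← hsplit]
    apply IntegrableOn.union
    · exact AntitoneOn.integrableOn_isCompact isCompact_Icc
        (fun a ha b hb hab => hΨanti a b (by linarith [ha.1]) hab)
    · -- on Ici 2, dominate by Φ (2⁻¹ * s)
      have hcomp : IntegrableOn (fun x => Φ (2⁻¹ * x)) (Ioi 2) := by
        rw [integrableOn_Ioi_comp_mul_left_iff Φ 2 (by norm_num : (0:ℝ) < 2⁻¹)]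
        norm_num
        exact hΦint.mono_set Ioi_subset_Ici_self
      rw [integrableOn_Ici_iff_integrableOn_Ioi]
      apply Integrable.mono hcomp
      · exact (aemeasurable_restrict_of_antitoneOn measurableSet_Ioi
          (fun a ha b hb hab => hΨanti a b (by linarith [mem_Ioi.1 ha]) hab)).aestronglyMeasurable
      · rw [ae_restrict_iff' measurableSet_Ioi]
        apply ae_of_all
        intro s hs
        have hs2 : (2:ℝ) ≤ s := (mem_Ioi.1 hs).le
        have hG2 : 0 < G (2⁻¹ * s) := hGpos _ (by linarith)
        have hb : Ψ s ≤ Φ (2⁻¹ * s) := by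
          rw [hΨdef, hΦdef]
          dsimp only
          rw [hrid (H s) (hHnn _ (mem_Ici.2 (by linarith)))]
          exact Real.rpow_le_rpow_of_nonpos hG2 (hkey1 s hs2) he1neg
        have hΨnn : 0 ≤ Ψ s := Real.rpow_nonneg (hHnn _ (mem_Ici.2 (by linarith))) _
        have hΦnn : 0 ≤ Φ (2⁻¹ * s) := Real.rpow_nonneg (hGnn _ (mem_Ici.2 (by linarith))) _
        rw [Real.norm_of_nonneg hΨnn, Real.norm_of_nonneg hΦnn]
        exact hb
  · -- backward: Ψ integrable on Ici 1 → Φ integrable on Ici 1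
    intro hΨint
    have hsplit : Icc (1:ℝ) 4 ∪ Ici (4:ℝ) = Ici (1:ℝ) :=
      Icc_union_Ici_eq_Ici (by norm_num)
    rw [← hsplit]
    apply IntegrableOn.union
    · exact AntitoneOn.integrableOn_isCompact isCompact_Icc
        (fun a ha b hb hab => hΦanti a b (by linarith [ha.1]) hab)
    · have hcomp : IntegrableOn (fun x => Ψ (4⁻¹ * x)) (Ioi 4) := by
        rw [integrableOn_Ioi_comp_mul_left_iff Ψ 4 (by norm_num : (0:ℝ) < 4⁻¹)]
        norm_num
        exact hΨint.mono_set Ioi_subset_Ici_self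
      rw [integrableOn_Ici_iff_integrableOn_Ioi]
      apply Integrable.mono hcomp
      · exact (aemeasurable_restrict_of_antitoneOn measurableSet_Ioi
          (fun a ha b hb hab => hΦanti a b (by linarith [mem_Ioi.1 ha]) hab)).aestronglyMeasurable
      · rw [ae_restrict_iff' measurableSet_Ioi]
        apply ae_of_all
        intro s hs
        have hs4 : (4:ℝ) ≤ s := (mem_Ioi.1 hs).le
        have hH4 : 0 < H (4⁻¹ * s) := hHpos _ (by linarith)
        have hb : Φ s ≤ Ψ (4⁻¹ * s) := by
          rw [hΨdef, hΦdef]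
          dsimp only
          rw [hrid (H (4⁻¹ * s)) (hHnn _ (mem_Ici.2 (by linarith)))]
          exact Real.rpow_le_rpow_of_nonpos (pow_pos hH4 2) (hkey2 s hs4) he1neg
        have hΦnn : 0 ≤ Φ s := Real.rpow_nonneg (hGnn _ (mem_Ici.2 (by linarith))) _
        have hΨnn : 0 ≤ Ψ (4⁻¹ * s) := Real.rpow_nonneg (hHnn _ (mem_Ici.2 (by linarith))) _
        rw [Real.norm_of_nonneg hΦnn, Real.norm_of_nonneg hΨnn]
        exact hb
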